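/- For a Catalan profile (ℓ_0, h_1, ℓ_1, …, h_r, ℓ_r) with r ≥ 1, one has C(ℓ_0,h_1,ℓ_1,…,h_r,ℓ_r) = ∑_{i=ξ}^{r-1} C(ℓ_0,h_1,ℓ_1,…,h_i,ℓ_i,h_{i+1}-1,ℓ_{i+1}-1,…,ℓ_{r-1}-1,h_r-1,ℓ_r) · (∑_{t=ℓ_i+1}^{h_{i+1}} [2t]_q), where ξ = max{ i : 0 ≤ i ≤ r-1, ℓ_i = 0 } and C(ℓ_0,h_1,…,h_r,ℓ_r) = (∏_i [h_i]_q! [h_i+1]_q!)/(∏_i [ℓ_i]_q! [ℓ_i+1]_q!). -/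

import Mathlib

open scoped Classical

inductive Letter | x | y
deriving DecidableEq

instance : Fintype Letter := ⟨{Letter.x, Letter.y}, fun a => by cases a <;> simp⟩

/-- x ↦ 1, y ↦ -1 -/
def bar : Letter → ℤ
  | .x => 1
  | .y => -1

/-- σ swaps the letters x and y. -/
def sigma : Letter → Letter
  | .x => .y
  | .y => .x

/-- the pairing ⟨u,v⟩ : 2 if u = v, -2 otherwise. -/
def pair : Letter → Letter → ℤ := fun u v => if u = v then 2 else -2

noncomputable section

/-- The free associative algebra on the two letters x, y (with its word basis). -/
abbrev V (F : Type*) [Field F] := MonoidAlgebra F (FreeMonoid Letter)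

variable {F : Type*} [Field F]

/-- the basis word of V corresponding to a list of letters -/
def wd (w : List Letter) : V F := MonoidAlgebra.single (FreeMonoid.ofList w) 1

/-- the q-shuffle product of two words, by the left recursion -/
def shuffleWord (q : F) : List Letter → List Letter → V F
  | [], v => wd v
  | u1 :: ut, [] => wd (u1 :: ut)
  | u1 :: ut, v1 :: vt =>
      wd [u1] * shuffleWord q ut (v1 :: vt)
      + q ^ (((u1 :: ut).map (fun a => pair a v1)).sum) •
          (wd [v1] * shuffleWord q (u1 :: ut) vt)
termination_by u v => u.length + v.length

/-- the q-shuffle product on V, extended bilinearly -/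
def shuffle (q : F) (a b : V F) : V F :=
  a.coeff.sum fun u cu => b.coeff.sum fun v cv =>
    (cu * cv) • shuffleWord q (FreeMonoid.toList u) (FreeMonoid.toList v)

/-- the quantum integer [m]_q -/
def qint (q : F) (m : ℤ) : F := (q ^ m - q ^ (-m)) / (q - q⁻¹)

/-- the quantum factorial [m]_q! -/
def qfac (q : F) (m : ℤ) : F := ∏ j ∈ Finset.range m.toNat, qint q ((j : ℤ) + 1)

/-- e_i = ā_1 + ⋯ + ā_i, the i-th elevation of the word w -/
def esum (w : List Letter) (i : ℕ) : ℤ := ((w.take i).map bar).sum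

/-- A word is Catalan when all partial sums of bar are nonnegative and the total is zero. -/
def IsCatalan (w : List Letter) : Prop :=
  (∀ i, i ≤ w.length → 0 ≤ esum w i) ∧ esum w w.length = 0

/-- the coefficient C(w) = ∏_{i=0}^{2n} [1 + e_i]_q -/
def Ccoef (q : F) (w : List Letter) : F :=
  ∏ i ∈ Finset.range (w.length + 1), qint q (1 + esum w i)

/-- the n-th Catalan element C_n = ∑_{w ∈ Cat_n} C(w) w  -/
def catalanElt (q : F) (n : ℕ) : V F :=
  ∑ f : Fin (2 * n) → Letter,
    if IsCatalan (List.ofFn f) then Ccoef q (List.ofFn f) • wd (List.ofFn f) else 0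

/-- the antiautomorphism ζ : reverse the word and swap x,y, extended linearly -/
def zeta (a : V F) : V F :=
  a.coeff.sum fun w c =>
    MonoidAlgebra.single (FreeMonoid.ofList (((FreeMonoid.toList w).map sigma).reverse)) c

/-- The profile of a word: delete from the elevation sequence every interior e_i
    such that e_{i+1}-e_i and e_i-e_{i-1} have the same sign. -/
def profile (w : List Letter) : List ℤ :=
  (List.range (w.length + 1)).filterMap fun i =>
    if i = 0 ∨ i = w.length then some (esum w i)
    else if 0 < (esum w (i + 1) - esum w i) * (esum w i - esum w (i - 1)) then none
    else some (esum w i)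

/-- The list (ℓ_0, h_1, ℓ_1, h_2, …, h_r, ℓ_r). -/
def P (r : ℕ) (ℓ h : ℕ → ℤ) : List ℤ :=
  List.ofFn fun i : Fin (2 * r + 1) =>
    if i.val % 2 = 0 then ℓ (i.val / 2) else h ((i.val + 1) / 2)

/-- the word x^{h_1} y^{h_1-ℓ_1} x^{h_2-ℓ_1} y^{h_2-ℓ_2} ⋯ x^{h_r-ℓ_{r-1}} y^{h_r} -/
def explicitWord (r : ℕ) (ℓ h : ℕ → ℤ) : List Letter :=
  (List.range r).flatMap fun i =>
    List.replicate (h (i + 1) - ℓ i).toNat Letter.x ++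
      List.replicate (h (i + 1) - ℓ (i + 1)).toNat Letter.y

/-- C(ℓ_0,h_1,…,h_r,ℓ_r), the ratio of q-factorials attached to a profile. -/
def Cprof (q : F) (r : ℕ) (ℓ h : ℕ → ℤ) : F :=
  (∏ i ∈ Finset.Icc 1 r, qfac q (h i) * qfac q (h i + 1)) /
    (∏ i ∈ Finset.range (r + 1), qfac q (ℓ i) * qfac q (ℓ i + 1))

end


section Helpers

variable {F : Type*} [Field F]

lemma qint_zero (q : F) : qint q 0 = 0 := by simp [qint]

lemma sub_inv_ne_zero {q : F} (hq0 : q ≠ 0) (hq : ∀ k : ℕ, 0 < k → q ^ k ≠ 1) :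
    q - q⁻¹ ≠ 0 := by
  intro hcon
  apply hq 2 (by norm_num)
  have h1 : q = q⁻¹ := sub_eq_zero.mp hcon
  have : q ^ 2 = q * q⁻¹ := by rw [← h1]; ring
  rw [mul_inv_cancel₀ hq0] at this
  exact this

lemma qint_ne_zero {q : F} (hq0 : q ≠ 0) (hq : ∀ k : ℕ, 0 < k → q ^ k ≠ 1)
    {m : ℤ} (hm : 1 ≤ m) : qint q m ≠ 0 := by
  have hd := sub_inv_ne_zero hq0 hq
  apply div_ne_zero _ hd
  intro hcon
  have h1 : q ^ m = q ^ (-m) := sub_eq_zero.mp hcon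
  have h2 : q ^ (2 * m) = 1 := by
    rw [two_mul, zpow_add₀ hq0]
    nth_rewrite 2 [h1]
    rw [← zpow_add₀ hq0]
    simp
  apply hq (2 * m).toNat (by omega)
  rw [← zpow_natCast, Int.toNat_of_nonneg (by omega)]
  exact h2

lemma qfac_ne_zero {q : F} (hq0 : q ≠ 0) (hq : ∀ k : ℕ, 0 < k → q ^ k ≠ 1)
    (m : ℤ) : qfac q m ≠ 0 := by
  rw [qfac]
  apply Finset.prod_ne_zero_iff.mpr
  intro j _
  exact qint_ne_zero hq0 hq (by omega)

lemma qfac_succ {q : F} {m : ℤ} (hm : 0 ≤ m) :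
    qfac q (m + 1) = qfac q m * qint q (m + 1) := by
  rw [qfac, qfac]
  have h1 : (m + 1).toNat = m.toNat + 1 := by omega
  have h2 : ((m.toNat : ℤ)) + 1 = m + 1 := by omega
  rw [h1, Finset.prod_range_succ, h2]

lemma qfac_pair {q : F} {m : ℤ} (hm : 1 ≤ m) :
    qfac q (m - 1) * qfac q m * (qint q m * qint q (m + 1)) = qfac q m * qfac q (m + 1) := by
  have h1 : qfac q m = qfac q (m - 1) * qint q m := by
    have := qfac_succ (q := q) (m := m - 1) (by omega)
    simpa using this
  have h2 : qfac q (m + 1) = qfac q m * qint q (m + 1) := qfac_succ (by omega)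
  rw [h2]
  nth_rewrite 3 [h1]
  ring

lemma qint_two_mul {q : F} (hq0 : q ≠ 0) (hd : q - q⁻¹ ≠ 0) (t : ℤ) :
    qint q (2 * t) = qint q t * qint q (t + 1) - qint q (t - 1) * qint q t := by
  have ha : q ^ t ≠ 0 := zpow_ne_zero _ hq0
  have e1 : q ^ (t + 1) = q ^ t * q := by rw [zpow_add₀ hq0, zpow_one]
  have e2 : q ^ (t - 1) = q ^ t * q⁻¹ := by rw [zpow_sub₀ hq0, zpow_one, div_eq_mul_inv]
  have e3 : q ^ (2 * t) = q ^ t * q ^ t := by rw [two_mul, zpow_add₀ hq0]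
  have expand : ∀ m : ℤ, qint q m * (q - q⁻¹) = q ^ m - (q ^ m)⁻¹ := by
    intro m; rw [qint, zpow_neg, div_mul_cancel₀ _ hd]
  apply mul_right_cancel₀ (b := (q - q⁻¹) ^ 2) (pow_ne_zero 2 hd)
  calc qint q (2 * t) * (q - q⁻¹) ^ 2
      = (qint q (2 * t) * (q - q⁻¹)) * (q - q⁻¹) := by ring
    _ = (q ^ (2 * t) - (q ^ (2 * t))⁻¹) * (q - q⁻¹) := by rw [expand]
    _ = (q ^ t - (q ^ t)⁻¹) * (q ^ (t + 1) - (q ^ (t + 1))⁻¹)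
          - (q ^ (t - 1) - (q ^ (t - 1))⁻¹) * (q ^ t - (q ^ t)⁻¹) := by
        rw [e1, e2, e3]
        field_simp
        ring
    _ = (qint q t * (q - q⁻¹)) * (qint q (t + 1) * (q - q⁻¹))
          - (qint q (t - 1) * (q - q⁻¹)) * (qint q t * (q - q⁻¹)) := by
        rw [expand, expand, expand]
    _ = (qint q t * qint q (t + 1) - qint q (t - 1) * qint q t) * (q - q⁻¹) ^ 2 := by ring

lemma sum_qint_telescope {q : F} (hq0 : q ≠ 0) (hd : q - q⁻¹ ≠ 0) {a b : ℤ} (hab : a ≤ b) :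
    ∑ t ∈ Finset.Icc (a + 1) b, qint q (2 * t)
      = qint q b * qint q (b + 1) - qint q a * qint q (a + 1) := by
  refine Int.le_induction (motive := fun b _ => ∑ t ∈ Finset.Icc (a + 1) b, qint q (2 * t)
      = qint q b * qint q (b + 1) - qint q a * qint q (a + 1)) ?_ ?_ b hab
  · simp [Finset.Icc_eq_empty_of_lt (show a < a + 1 by omega)]
  · intro b hb ih
    have hins : Finset.Icc (a + 1) (b + 1) = insert (b + 1) (Finset.Icc (a + 1) b) := by
      ext x
      simp only [Finset.mem_Icc, Finset.mem_insert]
      omega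
    rw [hins, Finset.sum_insert (by simp), ih, qint_two_mul hq0 hd]
    ring_nf

end Helpers


theorem stmt15 {F : Type*} [Field F] (q : F) (hq0 : q ≠ 0)
    (hq : ∀ k : ℕ, 0 < k → q ^ k ≠ 1) (r : ℕ) (hr : 1 ≤ r) (ℓ h : ℕ → ℤ)
    (h0 : ℓ 0 = 0) (hℓr : ℓ r = 0) (hℓ : ∀ i, 1 ≤ i → i + 1 ≤ r → 0 ≤ ℓ i)
    (hlh : ∀ i, 1 ≤ i → i ≤ r → ℓ (i - 1) < h i)
    (hhl : ∀ i, 1 ≤ i → i ≤ r → ℓ i < h i)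
    (ξ : ℕ) (hξ1 : ξ ≤ r - 1) (hξ2 : ℓ ξ = 0)
    (hξ3 : ∀ j, j ≤ r - 1 → ℓ j = 0 → j ≤ ξ) :
    Cprof q r ℓ h =
      ∑ i ∈ Finset.Icc ξ (r - 1),
        Cprof q r (fun j => if j ≤ i then ℓ j else if j = r then ℓ r else ℓ j - 1)
          (fun j => if j ≤ i then h j else h j - 1)
        * ∑ t ∈ Finset.Icc (ℓ i + 1) (h (i + 1)), qint q (2 * t) := by
  have hd : q - q⁻¹ ≠ 0 := sub_inv_ne_zero hq0 hq
  have hℓnn : ∀ j, j ≤ r → 0 ≤ ℓ j := by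
    intro j hj
    by_cases hj0 : j = 0
    · rw [hj0, h0]
    · by_cases hjr : j = r
      · rw [hjr, hℓr]
      · exact hℓ j (by omega) (by omega)
  have hh1 : ∀ j, 1 ≤ j → j ≤ r → 1 ≤ h j := by
    intro j hj1 hj2
    have := hlh j hj1 hj2
    have := hℓnn (j - 1) (by omega)
    omega
  have hℓpos : ∀ j, ξ < j → j ≤ r - 1 → 1 ≤ ℓ j := by
    intro j hj1 hj2
    have hnn := hℓnn j (by omega)
    have : ℓ j ≠ 0 := fun hc => absurd (hξ3 j hj2 hc) (by omega)
    omega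
  set L : ℕ → F := fun j => qint q (ℓ j) * qint q (ℓ j + 1) with hLdef
  set H : ℕ → F := fun j => qint q (h j) * qint q (h j + 1) with hHdef
  set g : ℕ → F := fun i =>
    (∏ j ∈ Finset.Icc i (r - 1), L j) / (∏ j ∈ Finset.Ioc i r, H j) with hgdef
  have hHne : ∀ j, 1 ≤ j → j ≤ r → H j ≠ 0 := by
    intro j hj1 hj2
    exact mul_ne_zero (qint_ne_zero hq0 hq (hh1 j hj1 hj2))
      (qint_ne_zero hq0 hq (by have := hh1 j hj1 hj2; omega))
  have hLne : ∀ j, ξ < j → j ≤ r - 1 → L j ≠ 0 := by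
    intro j hj1 hj2
    exact mul_ne_zero (qint_ne_zero hq0 hq (hℓpos j hj1 hj2))
      (qint_ne_zero hq0 hq (by have := hℓpos j hj1 hj2; omega))
  have hPH : ∀ i : ℕ, (∏ j ∈ Finset.Ioc i r, H j) ≠ 0 := by
    intro i
    apply Finset.prod_ne_zero_iff.mpr
    intro j hj
    simp only [Finset.mem_Ioc] at hj
    exact hHne j (by omega) hj.2
  have key2 : ∀ i, ξ ≤ i → i ≤ r - 1 →
      Cprof q r (fun j => if j ≤ i then ℓ j else if j = r then ℓ r else ℓ j - 1)
        (fun j => if j ≤ i then h j else h j - 1)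
      = Cprof q r ℓ h * (∏ j ∈ Finset.Ioc i (r - 1), L j) / (∏ j ∈ Finset.Ioc i r, H j) := by
    intro i hi1 hi2
    have hnum : (∏ j ∈ Finset.Icc 1 r,
          qfac q (if j ≤ i then h j else h j - 1) * qfac q ((if j ≤ i then h j else h j - 1) + 1))
          * (∏ j ∈ Finset.Ioc i r, H j)
        = ∏ j ∈ Finset.Icc 1 r, qfac q (h j) * qfac q (h j + 1) := by
      have hsub : Finset.Ioc i r ⊆ Finset.Icc 1 r := by
        intro x hx
        simp only [Finset.mem_Ioc, Finset.mem_Icc] at hx ⊢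
        omega
      have h1 : ∏ j ∈ Finset.Ioc i r, H j
          = ∏ j ∈ Finset.Icc 1 r, (if j ≤ i then (1 : F) else H j) := by
        rw [← Finset.prod_subset hsub (by
          intro x hx hx2
          simp only [Finset.mem_Ioc] at hx2
          simp only [Finset.mem_Icc] at hx
          rw [if_pos (by omega)])]
        exact Finset.prod_congr rfl (by
          intro x hx
          simp only [Finset.mem_Ioc] at hx
          rw [if_neg (by omega)])
      rw [h1, ← Finset.prod_mul_distrib]
      apply Finset.prod_congr rfl
      intro j hj
      simp only [Finset.mem_Icc] at hj
      by_cases hji : j ≤ i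
      · rw [if_pos hji, if_pos hji, mul_one]
      · rw [if_neg hji, if_neg hji]
        have hjh : 1 ≤ h j := hh1 j hj.1 hj.2
        calc qfac q (h j - 1) * qfac q (h j - 1 + 1) * H j
            = qfac q (h j - 1) * qfac q (h j) * (qint q (h j) * qint q (h j + 1)) := by
              rw [hHdef, show h j - 1 + 1 = h j by ring]
          _ = qfac q (h j) * qfac q (h j + 1) := qfac_pair hjh
    have hden : (∏ j ∈ Finset.range (r + 1),
          qfac q (if j ≤ i then ℓ j else if j = r then ℓ r else ℓ j - 1)
            * qfac q ((if j ≤ i then ℓ j else if j = r then ℓ r else ℓ j - 1) + 1))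
          * (∏ j ∈ Finset.Ioc i (r - 1), L j)
        = ∏ j ∈ Finset.range (r + 1), qfac q (ℓ j) * qfac q (ℓ j + 1) := by
      have hsub : Finset.Ioc i (r - 1) ⊆ Finset.range (r + 1) := by
        intro x hx
        simp only [Finset.mem_Ioc] at hx
        simp only [Finset.mem_range]
        omega
      have h1 : ∏ j ∈ Finset.Ioc i (r - 1), L j
          = ∏ j ∈ Finset.range (r + 1), (if i < j ∧ j ≤ r - 1 then L j else (1 : F)) := by
        rw [← Finset.prod_subset hsub (by
          intro x hx hx2
          simp only [Finset.mem_Ioc] at hx2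
          rw [if_neg (by omega)])]
        exact Finset.prod_congr rfl (by
          intro x hx
          simp only [Finset.mem_Ioc] at hx
          rw [if_pos (by omega)])
      rw [h1, ← Finset.prod_mul_distrib]
      apply Finset.prod_congr rfl
      intro j hj
      simp only [Finset.mem_range] at hj
      by_cases hji : j ≤ i
      · rw [if_pos hji, if_neg (show ¬(i < j ∧ j ≤ r - 1) by omega), mul_one]
      · by_cases hjr : j = r
        · rw [if_neg hji, if_pos hjr, if_neg (show ¬(i < j ∧ j ≤ r - 1) by omega), hjr, mul_one]
        · rw [if_neg hji, if_neg hjr, if_pos (show i < j ∧ j ≤ r - 1 by omega)]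
          have hjl : 1 ≤ ℓ j := hℓpos j (by omega) (by omega)
          calc qfac q (ℓ j - 1) * qfac q (ℓ j - 1 + 1) * L j
              = qfac q (ℓ j - 1) * qfac q (ℓ j) * (qint q (ℓ j) * qint q (ℓ j + 1)) := by
                rw [hLdef, show ℓ j - 1 + 1 = ℓ j by ring]
            _ = qfac q (ℓ j) * qfac q (ℓ j + 1) := qfac_pair hjl
    have hden_ne : (∏ j ∈ Finset.range (r + 1), qfac q (ℓ j) * qfac q (ℓ j + 1)) ≠ 0 := by
      apply Finset.prod_ne_zero_iff.mpr
      intro j _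
      exact mul_ne_zero (qfac_ne_zero hq0 hq _) (qfac_ne_zero hq0 hq _)
    have hPL_ne : (∏ j ∈ Finset.Ioc i (r - 1), L j) ≠ 0 := by
      apply Finset.prod_ne_zero_iff.mpr
      intro j hj
      simp only [Finset.mem_Ioc] at hj
      exact hLne j (by omega) hj.2
    have hPHi := hPH i
    have hden'_ne : (∏ j ∈ Finset.range (r + 1),
          qfac q (if j ≤ i then ℓ j else if j = r then ℓ r else ℓ j - 1)
            * qfac q ((if j ≤ i then ℓ j else if j = r then ℓ r else ℓ j - 1) + 1)) ≠ 0 := by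
      have h := hden_ne
      rw [← hden] at h
      exact left_ne_zero_of_mul h
    simp only [Cprof]
    rw [← hnum, ← hden]
    field_simp
  have key : ∀ i ∈ Finset.Icc ξ (r - 1),
      Cprof q r (fun j => if j ≤ i then ℓ j else if j = r then ℓ r else ℓ j - 1)
          (fun j => if j ≤ i then h j else h j - 1)
        * ∑ t ∈ Finset.Icc (ℓ i + 1) (h (i + 1)), qint q (2 * t)
      = Cprof q r ℓ h * (g (i + 1) - g i) := by
    intro i hi
    simp only [Finset.mem_Icc] at hi
    rw [key2 i hi.1 hi.2]
    have hab : ℓ i ≤ h (i + 1) := by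
      have := hlh (i + 1) (by omega) (by omega)
      simp only [Nat.add_sub_cancel] at this
      omega
    rw [sum_qint_telescope hq0 hd hab]
    have eH : qint q (h (i + 1)) * qint q (h (i + 1) + 1) = H (i + 1) := rfl
    have eL : qint q (ℓ i) * qint q (ℓ i + 1) = L i := rfl
    rw [eH, eL]
    have s1 : ∏ j ∈ Finset.Ioc i r, H j = H (i + 1) * ∏ j ∈ Finset.Ioc (i + 1) r, H j := by
      rw [show Finset.Ioc i r = insert (i + 1) (Finset.Ioc (i + 1) r) by
        ext x; simp only [Finset.mem_Ioc, Finset.mem_insert]; omega]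
      rw [Finset.prod_insert (by simp)]
    have s2 : ∏ j ∈ Finset.Icc i (r - 1), L j = L i * ∏ j ∈ Finset.Ioc i (r - 1), L j := by
      rw [show Finset.Icc i (r - 1) = insert i (Finset.Ioc i (r - 1)) by
        ext x; simp only [Finset.mem_Icc, Finset.mem_Ioc, Finset.mem_insert]; omega]
      rw [Finset.prod_insert (by simp)]
    have s3 : Finset.Icc (i + 1) (r - 1) = Finset.Ioc i (r - 1) := by
      ext x; simp only [Finset.mem_Icc, Finset.mem_Ioc]; omega
    simp only [hgdef]
    rw [s3, s1, s2]
    have hH1 : H (i + 1) ≠ 0 := hHne (i + 1) (by omega) (by omega)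
    have hPH' : (∏ j ∈ Finset.Ioc (i + 1) r, H j) ≠ 0 := hPH (i + 1)
    field_simp
  symm
  rw [Finset.sum_congr rfl key, ← Finset.mul_sum]
  have hIccIco : Finset.Icc ξ (r - 1) = Finset.Ico ξ r := by
    ext x; simp only [Finset.mem_Icc, Finset.mem_Ico]; omega
  rw [hIccIco, Finset.sum_Ico_eq_sum_range]
  simp only [Nat.add_assoc]
  rw [Finset.sum_range_sub (fun k => g (ξ + k))]
  have hgr : g r = 1 := by
    simp only [hgdef]
    rw [Finset.Icc_eq_empty (by omega), Finset.Ioc_self]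
    simp
  have hgξ : g ξ = 0 := by
    simp only [hgdef]
    rw [Finset.prod_eq_zero (Finset.mem_Icc.mpr ⟨le_refl ξ, hξ1⟩)
      (by rw [hLdef]; simp [hξ2, qint_zero]), zero_div]
  rw [show ξ + (r - ξ) = r by omega, show ξ + 0 = ξ from rfl, hgr, hgξ]
  ring
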